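/- Let n ≥ 1, let A and U₀ be real n×n matrices, and let a ∈ ℝ be a root of C_A := charpoly A of multiplicity p (C_A^{(i)}(a) = 0 for i < p, C_A^{(p)}(a) ≠ 0). Let f(t) := eval of charpoly(A + t·U₀) at a, a polynomial function of the real variable t, and assume f'(0) ≠ 0. Let ε ∈ ℝ* be a nonzero infinitesimal and let ξ ∈ ℝ* be infinitesimal such that a + ξ is a root of charpoly(A_* + ε·U₀_*). Then ξ^p·C_A^{(p)}(a)/(p!·ε·f'(0)) has standard part −1; that is, ξ^p ≈ −p!·ε·f'(0)/C_A^{(p)}(a) up to a factor infinitely close to 1. -/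

import Mathlib

open Hyperreal Polynomial

/-- The coercion `ℝ → ℝ*` as a ring homomorphism. -/
noncomputable def realToHyper : ℝ →+* ℝ* :=
  (Filter.Germ.coeRingHom _).comp (Pi.constRingHom ℕ ℝ)

lemma realToHyper_coe (r : ℝ) : realToHyper r = (r : ℝ*) := rfl

lemma isSt_eval_map (P : Polynomial ℝ) {x : ℝ*} {r : ℝ} (h : IsSt x r) :
    IsSt ((P.map realToHyper).eval x) (P.eval r) := by
  induction P using Polynomial.induction_on' with
  | add p q hp hq => simpa using hp.add hq
  | monomial n c =>
      have hxp : IsSt (x ^ n) (r ^ n) := by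
        induction n with
        | zero => simpa using isSt_refl_real 1
        | succ k ih => rw [pow_succ, pow_succ]; exact ih.mul h
      simpa [Polynomial.map_monomial, eval_monomial, realToHyper_coe]
        using (isSt_refl_real c).mul hxp

lemma isSt_finset_sum {ι : Type*} (s : Finset ι) (x : ι → ℝ*) (r : ι → ℝ)
    (h : ∀ i ∈ s, IsSt (x i) (r i)) :
    IsSt (∑ i ∈ s, x i) (∑ i ∈ s, r i) := by
  classical
  induction s using Finset.induction_on with
  | empty => simpa using isSt_refl_real 0
  | insert _ _ hni ih =>
      rename_i a s
      rw [Finset.sum_insert hni, Finset.sum_insert hni]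
      exact (h a (Finset.mem_insert_self a s)).add
        (ih fun i hi => h i (Finset.mem_insert_of_mem hi))

lemma Hyperreal.IsSt.inv'' {x : ℝ*} {r : ℝ} (h : IsSt x r) (hr : r ≠ 0) :
    IsSt x⁻¹ r⁻¹ := by
  have h2 := h.map (f := fun y : ℝ => y⁻¹) (continuousAt_inv₀ hr)
  convert h2 using 1
  exact Iff.rfl

lemma Hyperreal.IsSt.div'' {x y : ℝ*} {r s : ℝ} (hx : IsSt x r) (hy : IsSt y s) (hs : s ≠ 0) :
    IsSt (x / y) (r / s) := by
  rw [div_eq_mul_inv, div_eq_mul_inv]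
  exact hx.mul (hy.inv'' hs)

set_option maxRecDepth 10000 in
/-- Eigenvalue estimate for a linear perturbation `A + ε U₀` of a real matrix `A`:
if `a` is a root of `charpoly A` of multiplicity `p`, `f(t) := (charpoly (A + t U₀))(a)`
has `f'(0) ≠ 0`, and `a + ξ` is a root of `charpoly (A + ε U₀)` with `ξ` infinitesimal,
then `st (ξ^p · (charpoly A)⁽ᵖ⁾(a) / (p! · ε · f'(0))) = -1`. -/
theorem eigenvalue_linear_perturbation_estimate (n : ℕ) (hn : 1 ≤ n)
    (A U₀ : Matrix (Fin n) (Fin n) ℝ) (a : ℝ) (p : ℕ)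
    (hmult : ∀ i < p, (derivative^[i] A.charpoly).eval a = 0)
    (hp : (derivative^[p] A.charpoly).eval a ≠ 0)
    (hf : deriv (fun t : ℝ => ((A + t • U₀).charpoly).eval a) 0 ≠ 0)
    (e : ℝ*) (he0 : e ≠ 0) (he : Infinitesimal e)
    (ξ : ℝ*) (hξ : Infinitesimal ξ)
    (hroot : ((A.map realToHyper + e • U₀.map realToHyper).charpoly).eval ((a : ℝ*) + ξ) = 0) :
    IsSt (ξ ^ p * (((derivative^[p] A.charpoly).eval a : ℝ) : ℝ*) /
      ((Nat.factorial p : ℝ*) * e *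
        ((deriv (fun t : ℝ => ((A + t • U₀).charpoly).eval a) 0 : ℝ) : ℝ*))) (-1) := by
  classical
  have heIsSt : IsSt e 0 := he
  have hξIsSt : IsSt ξ 0 := hξ
  set M : Matrix (Fin n) (Fin n) (Polynomial ℝ) :=
    A.map Polynomial.C + (X : Polynomial ℝ) • U₀.map Polynomial.C with hM
  set Q : Polynomial (Polynomial ℝ) := M.charpoly with hQdef
  set ψ : Polynomial ℝ →+* ℝ* := eval₂RingHom realToHyper e with hψ
  set φ₀ : Polynomial ℝ →+* ℝ := evalRingHom 0 with hφ₀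
  -- matrix maps
  have hMψ : M.map ψ = A.map realToHyper + e • U₀.map realToHyper := by
    ext i j
    simp [hM, hψ, Matrix.map_apply, Matrix.add_apply, Matrix.smul_apply, smul_eq_mul,
      coe_eval₂RingHom, eval₂_C, eval₂_X, realToHyper_coe]
    ring
  have hMt : ∀ t : ℝ, M.map (evalRingHom t) = A + t • U₀ := by
    intro t
    ext i j
    simp only [hM, Matrix.map_apply, Matrix.add_apply, Matrix.smul_apply, smul_eq_mul,
      map_add, map_mul, eval_C, eval_X, coe_evalRingHom, eval_add, eval_mul, mul_comm]
  have hMφ₀ : M.map φ₀ = A := by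
    rw [hφ₀, hMt 0, zero_smul, add_zero]
  -- Taylor expansion data
  set G : Polynomial (Polynomial ℝ) := taylor (Polynomial.C a) Q with hG
  set N : ℕ := G.natDegree with hN
  set g : ℕ → Polynomial ℝ := fun j => G.coeff j with hg
  set b : ℕ → ℝ := fun j => (g j).coeff 0 with hb
  set W : ℕ → ℝ* := fun j => ((g j).divX.map realToHyper).eval e with hW
  have hψCa : ψ (Polynomial.C a) = (a : ℝ*) := by
    rw [hψ]; simp [coe_eval₂RingHom, eval₂_C, realToHyper_coe]
  have hGψ : G.map ψ = taylor ((a : ℝ*)) (Q.map ψ) := by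
    rw [hG, taylor_apply, Polynomial.map_comp, taylor_apply]
    congr 1
    simp [hψCa]
  have hrootQ : (Q.map ψ).eval ((a : ℝ*) + ξ) = 0 := by
    rw [hQdef, ← Matrix.charpoly_map M ψ, hMψ]; exact hroot
  have hGeval : (G.map ψ).eval ξ = 0 := by
    rw [hGψ, taylor_eval, add_comm]; exact hrootQ
  have hdeg : (G.map ψ).natDegree < N + 1 :=
    lt_of_le_of_lt (natDegree_map_le) (Nat.lt_succ_self N)
  have hsum0 : (0 : ℝ*) = ∑ j ∈ Finset.range (N + 1), ψ (g j) * ξ ^ j := by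
    rw [← hGeval, eval_eq_sum_range' hdeg]
    exact Finset.sum_congr rfl fun j _ => by rw [coeff_map]
  -- coefficient decomposition
  have hgj : ∀ j, ψ (g j) = ((b j : ℝ) : ℝ*) + e * W j := by
    intro j
    conv_lhs => rw [← X_mul_divX_add (g j)]
    rw [map_add, map_mul]
    have h1 : ψ X = e := by rw [hψ]; simp [coe_eval₂RingHom]
    have h2 : ψ (Polynomial.C ((g j).coeff 0)) = ((b j : ℝ) : ℝ*) := by
      rw [hψ]; simp [coe_eval₂RingHom, eval₂_C, realToHyper_coe, hb]
    have h3 : ψ ((g j).divX) = W j := by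
      rw [hψ, hW]; simp [coe_eval₂RingHom, eval_map]
    rw [h1, h2, h3]; ring
  -- real coefficients via evaluation at t = 0
  have hφ₀Ca : φ₀ (Polynomial.C a) = a := by rw [hφ₀]; simp
  have hGφ₀ : G.map φ₀ = taylor a A.charpoly := by
    rw [hG, taylor_apply, Polynomial.map_comp, taylor_apply]
    congr 1
    · rw [hQdef, ← Matrix.charpoly_map M φ₀, hMφ₀]
    · simp [hφ₀Ca]
  have hbj : ∀ j, b j = (hasseDeriv j A.charpoly).eval a := by
    intro j
    have h1 : (G.map φ₀).coeff j = φ₀ (g j) := coeff_map _ _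
    rw [hGφ₀, taylor_coeff] at h1
    have h2 : φ₀ (g j) = b j := by
      rw [hφ₀, hb]; simp [coeff_zero_eq_eval_zero]
    rw [← h2, ← h1]
  have hfact : ∀ j, (j.factorial : ℝ) * b j = (derivative^[j] A.charpoly).eval a := by
    intro j
    have h := congrFun (Polynomial.factorial_smul_hasseDeriv (R := ℝ) j) A.charpoly
    rw [← h]
    simp [LinearMap.smul_apply, nsmul_eq_mul, hbj j]
  have hbzero : ∀ j < p, b j = 0 := by
    intro j hj
    have h := hfact j
    rw [hmult j hj] at h
    exact (mul_eq_zero.mp h).resolve_left (Nat.cast_ne_zero.2 j.factorial_ne_zero)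
  have hbp : b p ≠ 0 := fun h0 => hp (by rw [← hfact p, h0, mul_zero])
  -- the derivative f'(0)
  set F0 : ℝ := deriv (fun t : ℝ => ((A + t • U₀).charpoly).eval a) 0 with hF0
  have hg0 : g 0 = Q.eval (Polynomial.C a) := by
    rw [hg]
    show G.coeff 0 = _
    rw [hG, taylor_coeff_zero]
  have hfun : (fun t : ℝ => ((A + t • U₀).charpoly).eval a) = fun t => (g 0).eval t := by
    funext t
    have h1 : (A + t • U₀).charpoly = Q.map (evalRingHom t) := by
      rw [← hMt t, hQdef, Matrix.charpoly_map]
    have h2 : (evalRingHom t) (Q.eval (Polynomial.C a)) = Q.eval₂ (evalRingHom t) a := by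
      rw [show Q.eval (Polynomial.C a) = Q.eval₂ (RingHom.id _) (Polynomial.C a) from rfl,
        hom_eval₂]
      simp
    rw [h1, eval_map, hg0, ← h2, coe_evalRingHom]
  have hF0eval : F0 = ((g 0).divX).eval 0 := by
    rw [hF0, hfun, Polynomial.deriv]
    rw [← coeff_zero_eq_eval_zero, ← coeff_zero_eq_eval_zero, coeff_derivative, coeff_divX]
    simp
  -- standard parts
  have hWj : ∀ j, IsSt (W j) (((g j).divX).eval 0) := by
    intro j
    rw [hW]
    exact isSt_eval_map _ heIsSt
  have hξpow : ∀ j : ℕ, IsSt (ξ ^ j) ((0 : ℝ) ^ j) := by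
    intro j
    induction j with
    | zero => simpa using isSt_refl_real 1
    | succ k ih => rw [pow_succ, pow_succ]; exact ih.mul hξIsSt
  set S₁ : ℝ* := ∑ j ∈ Finset.range (N + 1), W j * ξ ^ j with hS₁def
  have hS₁ : IsSt S₁ F0 := by
    have h := isSt_finset_sum (Finset.range (N + 1)) (fun j => W j * ξ ^ j)
      (fun j => ((g j).divX).eval 0 * 0 ^ j) (fun j _ => (hWj j).mul (hξpow j))
    have hsum : ∑ j ∈ Finset.range (N + 1), ((g j).divX).eval 0 * (0 : ℝ) ^ j
        = ((g 0).divX).eval 0 := by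
      rw [Finset.sum_eq_single 0]
      · simp
      · intro j _ hj0; simp [zero_pow hj0]
      · intro h0; exact absurd (Finset.mem_range.2 (Nat.succ_pos N)) h0
    rw [hsum] at h
    rw [hS₁def, hF0eval]
    exact h
  set B : ℝ* := ∑ k ∈ Finset.range (N + 1 - p), ((b (p + k) : ℝ) : ℝ*) * ξ ^ k with hBdef
  have hpN : p ≤ N := by
    have h1 : (G.map φ₀).coeff p ≠ 0 := by
      rw [hGφ₀, taylor_coeff, ← hbj p]
      exact hbp
    exact le_trans (le_natDegree_of_ne_zero h1) natDegree_map_le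
  have hS₂ : ∑ j ∈ Finset.range (N + 1), ((b j : ℝ) : ℝ*) * ξ ^ j = ξ ^ p * B := by
    have hsub : ∑ j ∈ Finset.Ico p (N + 1), ((b j : ℝ) : ℝ*) * ξ ^ j
        = ∑ j ∈ Finset.range (N + 1), ((b j : ℝ) : ℝ*) * ξ ^ j := by
      refine Finset.sum_subset ?_ ?_
      · rw [Finset.range_eq_Ico]
        exact Finset.Ico_subset_Ico (Nat.zero_le p) le_rfl
      · intro x hx hnx
        have hxp : x < p := by
          simp only [Finset.mem_Ico, Finset.mem_range] at hx hnx
          omega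
        simp [hbzero x hxp]
    rw [← hsub, Finset.sum_Ico_eq_sum_range, hBdef, Finset.mul_sum]
    refine Finset.sum_congr rfl fun k _ => ?_
    rw [pow_add]; ring
  have hkey : ξ ^ p * B + e * S₁ = 0 := by
    have h1 : ∑ j ∈ Finset.range (N + 1), ψ (g j) * ξ ^ j
        = (∑ j ∈ Finset.range (N + 1), ((b j : ℝ) : ℝ*) * ξ ^ j)
          + e * ∑ j ∈ Finset.range (N + 1), W j * ξ ^ j := by
      rw [Finset.mul_sum, ← Finset.sum_add_distrib]
      exact Finset.sum_congr rfl fun j _ => by rw [hgj j]; ring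
    rw [h1, hS₂, ← hS₁def] at hsum0
    exact hsum0.symm
  have hBst : IsSt B (b p) := by
    have h := isSt_finset_sum (Finset.range (N + 1 - p)) (fun k => ((b (p + k) : ℝ) : ℝ*) * ξ ^ k)
      (fun k => b (p + k) * 0 ^ k) (fun k _ => (isSt_refl_real _).mul (hξpow k))
    have hsum : ∑ k ∈ Finset.range (N + 1 - p), b (p + k) * (0 : ℝ) ^ k = b p := by
      rw [Finset.sum_eq_single 0]
      · simp
      · intro k _ hk0; simp [zero_pow hk0]
      · intro h0; exact absurd (Finset.mem_range.2 (by omega)) h0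
    rw [hsum] at h
    exact h
  have hBne : B ≠ 0 := by
    intro h0
    rw [h0] at hBst
    have hz : IsSt (0 : ℝ*) 0 := by simpa using isSt_refl_real 0
    exact hbp (hBst.unique hz)
  have hξp : ξ ^ p = -(e * S₁) / B := by
    rw [eq_div_iff hBne]
    linear_combination hkey
  -- conclusion
  have hF0ne : F0 ≠ 0 := hf
  have hfacne : ((p.factorial : ℝ*)) ≠ 0 := Nat.cast_ne_zero.2 p.factorial_ne_zero
  have hF0ne' : ((F0 : ℝ) : ℝ*) ≠ 0 := coe_ne_zero.2 hF0ne
  have hbp' : ((b p : ℝ) : ℝ*) ≠ 0 := coe_ne_zero.2 hbp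
  have hfacne' : (((p.factorial : ℝ)) : ℝ*) ≠ 0 :=
    coe_ne_zero.2 (Nat.cast_ne_zero.2 p.factorial_ne_zero)
  have hDfact : ((derivative^[p] A.charpoly).eval a : ℝ) = (p.factorial : ℝ) * b p :=
    (hfact p).symm
  rw [hDfact]
  have hE : ξ ^ p * (((p.factorial : ℝ) * b p : ℝ) : ℝ*)
      / ((p.factorial : ℝ*) * e * ((F0 : ℝ) : ℝ*))
      = -(S₁ * ((b p : ℝ) : ℝ*)) / (B * ((F0 : ℝ) : ℝ*)) := by
    rw [hξp, show ((p.factorial : ℝ*)) = (((p.factorial : ℝ)) : ℝ*) from rfl]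
    field_simp [hfacne', hbp', hF0ne', hBne, he0]
    push_cast
    ring
  rw [hE]
  have hnum : IsSt (-(S₁ * ((b p : ℝ) : ℝ*))) (-(F0 * b p)) :=
    (hS₁.mul (isSt_refl_real _)).neg
  have hden : IsSt (B * ((F0 : ℝ) : ℝ*)) (b p * F0) := hBst.mul (isSt_refl_real _)
  have hfin := hnum.div'' hden (mul_ne_zero hbp hF0ne)
  have hval : -(F0 * b p) / (b p * F0) = -1 := by
    field_simp
  rw [hval] at hfin
  exact hfin
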